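/- arXiv:1704.08789 — 2 statements merged into one kernel-verified Lean document; each statement's English description precedes it below -/
import Mathlib

section
/- Let M be a compact metric space with a finite good covering 𝒰 = {U_1,…,U_N}, and let q : D(𝒰) → M be the projection q(θ,x) = x. Then there exists a Lipschitz map τ : M → D(𝒰) such that q∘τ = 1_M and τ(M) is a Lipschitz strong deformation retract of D(𝒰). -/
open Metric Set
open scoped ENNReal NNReal

/-- A subset `V` of a metric space admits a *Lipschitz strong deformation retraction to a
point*. -/
def IsLipSDRToPoint {X : Type*} [MetricSpace X] (V : Set X) : Prop :=
  ∃ (p : V) (F : V × unitInterval → V) (K : NNReal),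
    LipschitzWith K F ∧ (∀ x, F (x, 0) = x) ∧ (∀ x, F (x, 1) = p) ∧ (∀ t, F (p, t) = p)

/-- A subset `A` of a metric space `X` is a *Lipschitz strong deformation retract* of `X`. -/
def IsLipSDR {X : Type*} [MetricSpace X] (A : Set X) : Prop :=
  ∃ (F : X × unitInterval → X) (K : NNReal), LipschitzWith K F ∧
    (∀ x, F (x, 0) = x) ∧ (∀ x, F (x, 1) ∈ A) ∧ (∀ a ∈ A, ∀ t, F (a, t) = a)

/-- A locally finite open covering is *good*. -/
def IsGoodCovering {X : Type*} [MetricSpace X] {J : Type*} (U : J → Set X) : Prop :=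
  (∀ j, IsOpen (U j)) ∧ (⋃ j, U j) = univ ∧ LocallyFinite U ∧
    (∀ j, IsCompact (closure (U j))) ∧
    ∀ s : Finset J, s.Nonempty → (⋂ j ∈ s, U j).Nonempty → IsLipSDRToPoint (⋂ j ∈ s, U j)

/-- The geometric realization of the nerve of a finite covering, with the sup metric. -/
def NerveSet {M : Type*} [MetricSpace M] {N : ℕ} (U : Fin N → Set M) : Set (Fin N → ℝ) :=
  {θ | (∀ j, θ j ∈ Icc (0:ℝ) 1) ∧ ∑ j, θ j = 1 ∧ (⋂ j ∈ {j | θ j ≠ 0}, U j).Nonempty}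

/-- `D(𝒰) = {(θ, x) ∈ |𝒩_𝒰| × M : x ∈ ⋂_{j ∈ supp θ} U_j}`, as a subset of the `ℓ²`
product `|𝒩_𝒰| ×₂ M` (so that `d((θ,x),(θ',x'))² = d(θ,θ')² + d(x,x')²`). -/
def DSet {M : Type*} [MetricSpace M] {N : ℕ} (U : Fin N → Set M) :
    Set (WithLp 2 (↥(NerveSet U) × M)) :=
  {z | (WithLp.equiv 2 (↥(NerveSet U) × M) z).2 ∈
    ⋂ j ∈ {j | ((WithLp.equiv 2 (↥(NerveSet U) × M) z).1 : Fin N → ℝ) j ≠ 0}, U j}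


section Aux
variable {M : Type*} [MetricSpace M] {N : ℕ}



open scoped Classical in
/-- truncated distance-to-complement bump function -/
noncomputable def bump (U : Fin N → Set M) (j : Fin N) (x : M) : ℝ :=
  if ((U j)ᶜ).Nonempty then min (infDist x (U j)ᶜ) 1 else 1

lemma bump_nonneg (U : Fin N → Set M) (j : Fin N) (x : M) : 0 ≤ bump U j x := by
  unfold bump; split
  · exact le_min infDist_nonneg zero_le_one
  · exact zero_le_one

lemma bump_le_one (U : Fin N → Set M) (j : Fin N) (x : M) : bump U j x ≤ 1 := by
  unfold bump; split
  · exact min_le_right _ _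
  · exact le_rfl

lemma bump_lip (U : Fin N → Set M) (j : Fin N) (x y : M) :
    |bump U j x - bump U j y| ≤ dist x y := by
  unfold bump; split
  · refine (abs_min_sub_min_le_max _ _ _ _).trans ?_
    simp only [sub_self, abs_zero, max_le_iff]
    constructor
    · rw [abs_sub_le_iff]
      exact ⟨by linarith [infDist_le_infDist_add_dist (x := x) (y := y) (s := (U j)ᶜ)],
        by linarith [infDist_le_infDist_add_dist (x := y) (y := x) (s := (U j)ᶜ),
          dist_comm x y]⟩
    · exact dist_nonneg
  · simpa using dist_nonneg

lemma bump_pos_of_mem (U : Fin N → Set M) (hO : ∀ j, IsOpen (U j)) (j : Fin N) {x : M}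
    (hx : x ∈ U j) : 0 < bump U j x := by
  unfold bump; split
  · rename_i hne
    refine lt_min ?_ zero_lt_one
    rw [← (hO j).isClosed_compl.notMem_iff_infDist_pos hne]
    simpa using hx
  · exact zero_lt_one

lemma mem_of_bump_ne (U : Fin N → Set M) {j : Fin N} {x : M} (h : bump U j x ≠ 0) :
    x ∈ U j := by
  by_contra hx
  apply h
  unfold bump
  rw [if_pos ⟨x, hx⟩]
  have h0 : infDist x (U j)ᶜ = 0 := infDist_zero_of_mem hx
  rw [h0]
  simp

/-- the sum of the bump functions -/
noncomputable def bsum (U : Fin N → Set M) (x : M) : ℝ := ∑ j, bump U j x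

lemma bsum_lip (U : Fin N → Set M) (x y : M) : |bsum U x - bsum U y| ≤ N * dist x y := by
  unfold bsum
  rw [← Finset.sum_sub_distrib]
  refine (Finset.abs_sum_le_sum_abs _ _).trans ?_
  calc ∑ j, |bump U j x - bump U j y| ≤ ∑ _j : Fin N, dist x y :=
        Finset.sum_le_sum fun j _ => bump_lip U j x y
    _ = N * dist x y := by simp [mul_comm]

lemma bsum_nonneg (U : Fin N → Set M) (x : M) : 0 ≤ bsum U x :=
  Finset.sum_nonneg fun j _ => bump_nonneg U j x

lemma bump_le_bsum (U : Fin N → Set M) (j : Fin N) (x : M) : bump U j x ≤ bsum U x :=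
  Finset.single_le_sum (fun i _ => bump_nonneg U i x) (Finset.mem_univ j)

lemma bsum_pos (U : Fin N → Set M) (hO : ∀ j, IsOpen (U j)) (hcov : (⋃ j, U j) = univ)
    (x : M) : 0 < bsum U x := by
  have hx : x ∈ ⋃ j, U j := hcov ▸ mem_univ x
  obtain ⟨j, hj⟩ := mem_iUnion.1 hx
  exact lt_of_lt_of_le (bump_pos_of_mem U hO j hj) (bump_le_bsum U j x)

lemma exists_eps [CompactSpace M] (U : Fin N → Set M) (hO : ∀ j, IsOpen (U j))
    (hcov : (⋃ j, U j) = univ) : ∃ ε : ℝ, 0 < ε ∧ ∀ x, ε ≤ bsum U x := by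
  cases isEmpty_or_nonempty M with
  | inl h => exact ⟨1, zero_lt_one, fun x => absurd (h.false x) (by simp)⟩
  | inr h =>
    have hc : Continuous (bsum U) := by
      have : ∀ j : Fin N, Continuous (bump U j) := fun j =>
        LipschitzWith.continuous (K := 1)
          (LipschitzWith.of_dist_le_mul fun x y => by
            rw [Real.dist_eq]; simpa using bump_lip U j x y)
      exact continuous_finset_sum _ fun j _ => this j
    obtain ⟨x₀, -, hx₀⟩ := isCompact_univ.exists_isMinOn univ_nonempty hc.continuousOn
    exact ⟨bsum U x₀, bsum_pos U hO hcov x₀, fun x => hx₀ (mem_univ x)⟩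

/-- the Lipschitz partition of unity -/
noncomputable def pou (U : Fin N → Set M) (x : M) : Fin N → ℝ :=
  fun j => bump U j x / bsum U x

lemma pou_nonneg' (U : Fin N → Set M) (x : M) (j : Fin N) : 0 ≤ pou U x j :=
  div_nonneg (bump_nonneg U j x) (bsum_nonneg U x)

lemma pou_nonneg (U : Fin N → Set M) (hO : ∀ j, IsOpen (U j)) (hcov : (⋃ j, U j) = univ)
    (x : M) (j : Fin N) : 0 ≤ pou U x j :=
  div_nonneg (bump_nonneg U j x) (bsum_pos U hO hcov x).le

lemma pou_le_one (U : Fin N → Set M) (hO : ∀ j, IsOpen (U j)) (hcov : (⋃ j, U j) = univ)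
    (x : M) (j : Fin N) : pou U x j ≤ 1 :=
  (div_le_one (bsum_pos U hO hcov x)).2 (bump_le_bsum U j x)

lemma pou_sum (U : Fin N → Set M) (hO : ∀ j, IsOpen (U j)) (hcov : (⋃ j, U j) = univ)
    (x : M) : ∑ j, pou U x j = 1 := by
  unfold pou
  rw [← Finset.sum_div]
  exact div_self (bsum_pos U hO hcov x).ne'

lemma mem_of_pou_ne (U : Fin N → Set M) {x : M} {j : Fin N} (h : pou U x j ≠ 0) :
    x ∈ U j := by
  apply mem_of_bump_ne U (j := j) (x := x)
  intro hb
  exact h (by unfold pou; rw [hb]; simp)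

lemma pou_lip {ε : ℝ} (U : Fin N → Set M) (hε : 0 < ε) (hS : ∀ x, ε ≤ bsum U x)
    (j : Fin N) (x y : M) :
    |pou U x j - pou U y j| ≤ ((N + 1) / ε) * dist x y := by
  have hs : 0 < bsum U x := lt_of_lt_of_le hε (hS x)
  have ht : 0 < bsum U y := lt_of_lt_of_le hε (hS y)
  set a := bump U j x with ha
  set b := bump U j y with hb
  set s := bsum U x with hsd
  set t := bsum U y with htd
  have key : a / s - b / t = (a - b) / t + (a / s) * ((t - s) / t) := by
    field_simp
    ring
  have h1 : |a - b| ≤ dist x y := bump_lip U j x y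
  have h2 : |t - s| ≤ N * dist x y := by
    have := bsum_lip U y x
    rwa [dist_comm] at this
  have h3 : a / s ≤ 1 := (div_le_one hs).2 (bump_le_bsum U j x)
  have h4 : 0 ≤ a / s := div_nonneg (bump_nonneg U j x) hs.le
  have step1 : |pou U x j - pou U y j| ≤ |a - b| / t + (a / s) * (|t - s| / t) := by
    show |a / s - b / t| ≤ _
    rw [key]
    refine (abs_add_le _ _).trans ?_
    rw [abs_div, abs_mul, abs_div, abs_of_pos ht, abs_of_pos hs,
      abs_of_nonneg (bump_nonneg U j x)]
    rw [abs_div, abs_of_pos ht, ← ha]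
  refine step1.trans ?_
  have e1 : |a - b| / t ≤ dist x y / ε := div_le_div₀ dist_nonneg h1 hε (hS y)
  have e2 : (a / s) * (|t - s| / t) ≤ 1 * ((N * dist x y) / ε) :=
    mul_le_mul h3 (div_le_div₀ (by positivity) h2 hε (hS y))
      (div_nonneg (abs_nonneg _) ht.le) zero_le_one
  calc |a - b| / t + (a / s) * (|t - s| / t) ≤ dist x y / ε + 1 * ((N * dist x y) / ε) :=
        add_le_add e1 e2
    _ = ((N + 1) / ε) * dist x y := by ring

lemma pou_lipschitz {ε : ℝ} (U : Fin N → Set M) (hε : 0 < ε) (hS : ∀ x, ε ≤ bsum U x) :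
    ∀ x y : M, dist (pou U x) (pou U y) ≤ ((N + 1) / ε) * dist x y := by
  intro x y
  rw [dist_pi_le_iff (by positivity)]
  intro j
  rw [Real.dist_eq]
  exact pou_lip U hε hS j x y

lemma pou_mem_nerve (U : Fin N → Set M) (hO : ∀ j, IsOpen (U j)) (hcov : (⋃ j, U j) = univ)
    (x : M) : pou U x ∈ NerveSet U := by
  refine ⟨fun j => ⟨pou_nonneg U hO hcov x j, pou_le_one U hO hcov x j⟩,
    pou_sum U hO hcov x, ⟨x, ?_⟩⟩
  rw [mem_iInter₂]
  exact fun j hj => mem_of_pou_ne U hj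

/-- the section `τ` -/
noncomputable def tau (U : Fin N → Set M) (hO : ∀ j, IsOpen (U j))
    (hcov : (⋃ j, U j) = univ) : M → ↥(DSet U) := fun x =>
  ⟨(WithLp.equiv 2 (↥(NerveSet U) × M)).symm (⟨pou U x, pou_mem_nerve U hO hcov x⟩, x), by
    simp only [DSet, mem_setOf_eq, Equiv.apply_symm_apply]
    exact mem_iInter₂.2 fun j hj => mem_of_pou_ne U hj⟩

/-- first component of a point of `DSet` -/
def thOf (U : Fin N → Set M) (z : ↥(DSet U)) : ↥(NerveSet U) :=
  (WithLp.equiv 2 (↥(NerveSet U) × M) z.val).1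

/-- second component of a point of `DSet` -/
def ptOf (U : Fin N → Set M) (z : ↥(DSet U)) : M :=
  (WithLp.equiv 2 (↥(NerveSet U) × M) z.val).2

lemma mem_U_of_thOf_ne (U : Fin N → Set M) (z : ↥(DSet U)) {j : Fin N}
    (h : (thOf U z : Fin N → ℝ) j ≠ 0) : ptOf U z ∈ U j :=
  mem_iInter₂.1 z.2 j h

/-- the convex combination used in the deformation retraction -/
noncomputable def comb (U : Fin N → Set M) (z : ↥(DSet U)) (t : ℝ) : Fin N → ℝ :=
  fun j => (1 - t) * (thOf U z : Fin N → ℝ) j + t * pou U (ptOf U z) j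

lemma comb_mem_U (U : Fin N → Set M) (z : ↥(DSet U)) {t : ℝ} (ht : t ∈ Icc (0:ℝ) 1)
    {j : Fin N} (h : comb U z t j ≠ 0) : ptOf U z ∈ U j := by
  have h1 : 0 ≤ (1 - t) * (thOf U z : Fin N → ℝ) j :=
    mul_nonneg (by linarith [ht.2]) ((thOf U z).2.1 j).1
  have h2 : 0 ≤ t * pou U (ptOf U z) j := mul_nonneg ht.1 (pou_nonneg' U _ j)
  have hne : (1 - t) * (thOf U z : Fin N → ℝ) j ≠ 0 ∨ t * pou U (ptOf U z) j ≠ 0 := by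
    by_contra hc
    push_neg at hc
    exact h (by simp only [comb, hc.1, hc.2, add_zero])
  rcases hne with hne | hne
  · exact mem_U_of_thOf_ne U z (mul_ne_zero_iff.1 hne).2
  · exact mem_of_pou_ne U (mul_ne_zero_iff.1 hne).2

lemma comb_mem_nerve (U : Fin N → Set M) (hO : ∀ j, IsOpen (U j))
    (hcov : (⋃ j, U j) = univ) (z : ↥(DSet U)) {t : ℝ} (ht : t ∈ Icc (0:ℝ) 1) :
    comb U z t ∈ NerveSet U := by
  have hφ0 := fun j => pou_nonneg U hO hcov (ptOf U z) j
  have hφ1 := fun j => pou_le_one U hO hcov (ptOf U z) j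
  refine ⟨fun j => ⟨?_, ?_⟩, ?_, ⟨ptOf U z, mem_iInter₂.2 fun j hj => comb_mem_U U z ht hj⟩⟩
  · exact add_nonneg (mul_nonneg (by linarith [ht.2]) ((thOf U z).2.1 j).1)
      (mul_nonneg ht.1 (hφ0 j))
  · have a1 : (1 - t) * (thOf U z : Fin N → ℝ) j ≤ (1 - t) * 1 :=
      mul_le_mul_of_nonneg_left ((thOf U z).2.1 j).2 (by linarith [ht.2])
    have a2 : t * pou U (ptOf U z) j ≤ t * 1 := mul_le_mul_of_nonneg_left (hφ1 j) ht.1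
    show (1 - t) * (thOf U z : Fin N → ℝ) j + t * pou U (ptOf U z) j ≤ 1
    linarith
  · show ∑ j, ((1 - t) * (thOf U z : Fin N → ℝ) j + t * pou U (ptOf U z) j) = 1
    rw [Finset.sum_add_distrib, ← Finset.mul_sum, ← Finset.mul_sum,
      (thOf U z).2.2.1, pou_sum U hO hcov]
    ring

/-- the deformation retraction of `DSet U` onto the image of `tau` -/
noncomputable def defr (U : Fin N → Set M) (hO : ∀ j, IsOpen (U j))
    (hcov : (⋃ j, U j) = univ) : ↥(DSet U) × unitInterval → ↥(DSet U) := fun p =>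
  ⟨(WithLp.equiv 2 (↥(NerveSet U) × M)).symm
      (⟨comb U p.1 (p.2 : ℝ), comb_mem_nerve U hO hcov p.1 p.2.2⟩, ptOf U p.1), by
    simp only [DSet, mem_setOf_eq, Equiv.apply_symm_apply]
    exact mem_iInter₂.2 fun j hj => comb_mem_U U p.1 p.2.2 hj⟩

lemma ptOf_tau (U : Fin N → Set M) (hO : ∀ j, IsOpen (U j)) (hcov : (⋃ j, U j) = univ)
    (x : M) : ptOf U (tau U hO hcov x) = x := by
  simp only [ptOf, tau, Equiv.apply_symm_apply]

lemma thOf_tau (U : Fin N → Set M) (hO : ∀ j, IsOpen (U j)) (hcov : (⋃ j, U j) = univ)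
    (x : M) : (thOf U (tau U hO hcov x) : Fin N → ℝ) = pou U x := by
  simp only [thOf, tau, Equiv.apply_symm_apply]

lemma val_eq_symm (U : Fin N → Set M) (z : ↥(DSet U)) :
    z.val = (WithLp.equiv 2 (↥(NerveSet U) × M)).symm (thOf U z, ptOf U z) := by
  rw [Equiv.eq_symm_apply]
  exact Prod.mk.eta.symm

lemma defr_zero (U : Fin N → Set M) (hO : ∀ j, IsOpen (U j)) (hcov : (⋃ j, U j) = univ)
    (z : ↥(DSet U)) : defr U hO hcov (z, 0) = z := by
  apply Subtype.ext
  have h1 : (⟨comb U z ((0 : unitInterval) : ℝ),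
      comb_mem_nerve U hO hcov z (0 : unitInterval).2⟩ : ↥(NerveSet U)) = thOf U z := by
    refine Subtype.ext (funext fun j => ?_)
    show (1 - ((0 : unitInterval) : ℝ)) * (thOf U z : Fin N → ℝ) j +
      ((0 : unitInterval) : ℝ) * pou U (ptOf U z) j = (thOf U z : Fin N → ℝ) j
    simp
  show (WithLp.equiv 2 (↥(NerveSet U) × M)).symm
      (⟨comb U z ((0 : unitInterval) : ℝ),
        comb_mem_nerve U hO hcov z (0 : unitInterval).2⟩, ptOf U z) = z.val
  rw [h1]
  exact (val_eq_symm U z).symm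

lemma defr_one (U : Fin N → Set M) (hO : ∀ j, IsOpen (U j)) (hcov : (⋃ j, U j) = univ)
    (z : ↥(DSet U)) : defr U hO hcov (z, 1) = tau U hO hcov (ptOf U z) := by
  apply Subtype.ext
  have h1 : (⟨comb U z ((1 : unitInterval) : ℝ),
      comb_mem_nerve U hO hcov z (1 : unitInterval).2⟩ : ↥(NerveSet U)) =
      ⟨pou U (ptOf U z), pou_mem_nerve U hO hcov (ptOf U z)⟩ := by
    refine Subtype.ext (funext fun j => ?_)
    show (1 - ((1 : unitInterval) : ℝ)) * (thOf U z : Fin N → ℝ) j +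
      ((1 : unitInterval) : ℝ) * pou U (ptOf U z) j = pou U (ptOf U z) j
    simp
  show (WithLp.equiv 2 (↥(NerveSet U) × M)).symm
      (⟨comb U z ((1 : unitInterval) : ℝ),
        comb_mem_nerve U hO hcov z (1 : unitInterval).2⟩, ptOf U z) =
      (WithLp.equiv 2 (↥(NerveSet U) × M)).symm
        (⟨pou U (ptOf U z), pou_mem_nerve U hO hcov (ptOf U z)⟩, ptOf U z)
  rw [h1]

lemma defr_tau (U : Fin N → Set M) (hO : ∀ j, IsOpen (U j)) (hcov : (⋃ j, U j) = univ)
    (x : M) (t : unitInterval) : defr U hO hcov (tau U hO hcov x, t) = tau U hO hcov x := by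
  apply Subtype.ext
  have h1 : (⟨comb U (tau U hO hcov x) (t : ℝ),
      comb_mem_nerve U hO hcov (tau U hO hcov x) t.2⟩ : ↥(NerveSet U)) =
      thOf U (tau U hO hcov x) := by
    refine Subtype.ext (funext fun j => ?_)
    show (1 - (t : ℝ)) * (thOf U (tau U hO hcov x) : Fin N → ℝ) j +
      (t : ℝ) * pou U (ptOf U (tau U hO hcov x)) j = (thOf U (tau U hO hcov x) : Fin N → ℝ) j
    rw [ptOf_tau U hO hcov x, thOf_tau U hO hcov x]
    ring
  show (WithLp.equiv 2 (↥(NerveSet U) × M)).symm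
      (⟨comb U (tau U hO hcov x) (t : ℝ),
        comb_mem_nerve U hO hcov (tau U hO hcov x) t.2⟩, ptOf U (tau U hO hcov x)) =
      (tau U hO hcov x).val
  rw [h1]
  exact (val_eq_symm U (tau U hO hcov x)).symm

lemma tau_dist_le {ε : ℝ} (U : Fin N → Set M) (hO : ∀ j, IsOpen (U j))
    (hcov : (⋃ j, U j) = univ) (hε : 0 < ε) (hS : ∀ x, ε ≤ bsum U x) (x y : M) :
    dist (tau U hO hcov x) (tau U hO hcov y) ≤
      (((2 : ℝ≥0) ^ (1 / (2:ℝ≥0∞)).toReal : ℝ≥0) : ℝ) * (((N + 1) / ε + 1) * dist x y) := by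
  set L : ℝ := (N + 1) / ε with hLdef
  have hL : 0 ≤ L := by positivity
  have hv : ∀ w : M, WithLp.equiv 2 (↥(NerveSet U) × M) (tau U hO hcov w).val =
      (⟨pou U w, pou_mem_nerve U hO hcov w⟩, w) := fun w => Equiv.apply_symm_apply _ _
  have key := ((WithLp.prod_antilipschitzWith_ofLp 2 (↥(NerveSet U)) M :
    AntilipschitzWith _ (WithLp.equiv 2 (↥(NerveSet U) × M)))).le_mul_dist
    (tau U hO hcov x).val (tau U hO hcov y).val
  change dist _ _ ≤ _ * dist (WithLp.equiv 2 (↥(NerveSet U) × M) (tau U hO hcov x).val)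
    (WithLp.equiv 2 (↥(NerveSet U) × M) (tau U hO hcov y).val) at key
  rw [hv x, hv y] at key
  rw [Subtype.dist_eq]
  refine key.trans ?_
  rw [Prod.dist_eq]
  refine mul_le_mul_of_nonneg_left ?_ (NNReal.coe_nonneg _)
  have hd : dist (⟨pou U x, pou_mem_nerve U hO hcov x⟩ : ↥(NerveSet U))
      ⟨pou U y, pou_mem_nerve U hO hcov y⟩ = dist (pou U x) (pou U y) := Subtype.dist_eq _ _
  refine max_le ?_ ?_
  · rw [hd]
    refine (pou_lipschitz U hε hS x y).trans ?_
    have : 0 ≤ dist x y := dist_nonneg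
    nlinarith
  · have : 0 ≤ dist x y := dist_nonneg
    nlinarith

lemma defr_dist_le {ε : ℝ} (U : Fin N → Set M) (hO : ∀ j, IsOpen (U j))
    (hcov : (⋃ j, U j) = univ) (hε : 0 < ε) (hS : ∀ x, ε ≤ bsum U x)
    (p q : ↥(DSet U) × unitInterval) :
    dist (defr U hO hcov p) (defr U hO hcov q) ≤
      (((2 : ℝ≥0) ^ (1 / (2:ℝ≥0∞)).toReal : ℝ≥0) : ℝ) * (((N + 1) / ε + 3) * dist p q) := by
  obtain ⟨z, t⟩ := p
  obtain ⟨z', t'⟩ := q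
  set L : ℝ := (N + 1) / ε with hLdef
  have hL : 0 ≤ L := by positivity
  set D : ℝ := dist (⟨z, t⟩ : ↥(DSet U) × unitInterval) (⟨z', t'⟩ : ↥(DSet U) × unitInterval)
    with hD
  have hD0 : 0 ≤ D := dist_nonneg
  set dθ : ℝ := dist ((thOf U z : Fin N → ℝ)) ((thOf U z' : Fin N → ℝ)) with hdθ
  set dx : ℝ := dist (ptOf U z) (ptOf U z') with hdx
  set dt : ℝ := dist t t' with hdt
  have hdθ0 : 0 ≤ dθ := dist_nonneg
  have hdx0 : 0 ≤ dx := dist_nonneg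
  have hdt0 : 0 ≤ dt := dist_nonneg
  have hdzD : dist z.val z'.val ≤ D := by
    rw [← Subtype.dist_eq z z', hD, Prod.dist_eq]
    exact le_max_left _ _
  have hdtD : dt ≤ D := by
    rw [hD, Prod.dist_eq]
    exact le_max_right _ _
  have hpair : ∀ (w w' : ↥(DSet U)),
      dist (WithLp.equiv 2 (↥(NerveSet U) × M) w.val)
        (WithLp.equiv 2 (↥(NerveSet U) × M) w'.val) ≤ dist w.val w'.val := fun w w' => by
    have h1 := ((WithLp.prod_lipschitzWith_ofLp 2 (↥(NerveSet U)) M :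
      LipschitzWith 1 (WithLp.equiv 2 (↥(NerveSet U) × M)))).dist_le_mul w.val w'.val
    rwa [NNReal.coe_one, one_mul] at h1
  have hθz : dθ ≤ D := by
    refine le_trans ?_ ((hpair z z').trans hdzD)
    rw [Prod.dist_eq]
    refine le_trans ?_ (le_max_left _ _)
    rw [hdθ]
    exact le_of_eq (Subtype.dist_eq (thOf U z) (thOf U z')).symm
  have hxz : dx ≤ D := by
    refine le_trans ?_ ((hpair z z').trans hdzD)
    rw [Prod.dist_eq]
    exact le_max_right _ _
  -- coordinatewise estimate
  have hcoord : ∀ j, |comb U z (t : ℝ) j - comb U z' (t' : ℝ) j| ≤ dθ + L * dx + 2 * dt := by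
    intro j
    have b1 : |(thOf U z : Fin N → ℝ) j - (thOf U z' : Fin N → ℝ) j| ≤ dθ := by
      have := dist_le_pi_dist ((thOf U z : Fin N → ℝ)) ((thOf U z' : Fin N → ℝ)) j
      rwa [Real.dist_eq] at this
    have b2 : |pou U (ptOf U z) j - pou U (ptOf U z') j| ≤ L * dx :=
      pou_lip U hε hS j (ptOf U z) (ptOf U z')
    have b3 : |(thOf U z' : Fin N → ℝ) j| ≤ 1 :=
      abs_le.2 ⟨by linarith [((thOf U z').2.1 j).1], ((thOf U z').2.1 j).2⟩
    have b4 : |pou U (ptOf U z') j| ≤ 1 :=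
      abs_le.2 ⟨by linarith [pou_nonneg' U (ptOf U z') j],
        pou_le_one U hO hcov (ptOf U z') j⟩
    have b5 : |1 - (t : ℝ)| ≤ 1 := abs_le.2 ⟨by linarith [t.2.2], by linarith [t.2.1]⟩
    have b6 : |(t : ℝ)| ≤ 1 := abs_le.2 ⟨by linarith [t.2.1], t.2.2⟩
    have b7 : |(t' : ℝ) - (t : ℝ)| ≤ dt := by
      rw [abs_sub_comm, hdt, Subtype.dist_eq, Real.dist_eq]
    have b8 : |(t : ℝ) - (t' : ℝ)| ≤ dt := by
      rw [hdt, Subtype.dist_eq, Real.dist_eq]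
    have e : comb U z (t : ℝ) j - comb U z' (t' : ℝ) j =
        (1 - (t : ℝ)) * ((thOf U z : Fin N → ℝ) j - (thOf U z' : Fin N → ℝ) j) +
        ((t' : ℝ) - (t : ℝ)) * (thOf U z' : Fin N → ℝ) j +
        (t : ℝ) * (pou U (ptOf U z) j - pou U (ptOf U z') j) +
        ((t : ℝ) - (t' : ℝ)) * pou U (ptOf U z') j := by
      simp only [comb]
      ring
    rw [e]
    have habs : |(1 - (t : ℝ)) * ((thOf U z : Fin N → ℝ) j - (thOf U z' : Fin N → ℝ) j) +
        ((t' : ℝ) - (t : ℝ)) * (thOf U z' : Fin N → ℝ) j +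
        (t : ℝ) * (pou U (ptOf U z) j - pou U (ptOf U z') j) +
        ((t : ℝ) - (t' : ℝ)) * pou U (ptOf U z') j| ≤
        |1 - (t : ℝ)| * |(thOf U z : Fin N → ℝ) j - (thOf U z' : Fin N → ℝ) j| +
        |(t' : ℝ) - (t : ℝ)| * |(thOf U z' : Fin N → ℝ) j| +
        |(t : ℝ)| * |pou U (ptOf U z) j - pou U (ptOf U z') j| +
        |(t : ℝ) - (t' : ℝ)| * |pou U (ptOf U z') j| := by
      refine ((abs_add_le _ _).trans (add_le_add (abs_add_three _ _ _) le_rfl)).trans ?_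
      rw [abs_mul, abs_mul, abs_mul, abs_mul]
    refine habs.trans ?_
    have c1 : |1 - (t : ℝ)| * |(thOf U z : Fin N → ℝ) j - (thOf U z' : Fin N → ℝ) j| ≤
        1 * dθ := mul_le_mul b5 b1 (abs_nonneg _) zero_le_one
    have c2 : |(t' : ℝ) - (t : ℝ)| * |(thOf U z' : Fin N → ℝ) j| ≤ dt * 1 :=
      mul_le_mul b7 b3 (abs_nonneg _) hdt0
    have c3 : |(t : ℝ)| * |pou U (ptOf U z) j - pou U (ptOf U z') j| ≤ 1 * (L * dx) :=
      mul_le_mul b6 b2 (abs_nonneg _) zero_le_one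
    have c4 : |(t : ℝ) - (t' : ℝ)| * |pou U (ptOf U z') j| ≤ dt * 1 :=
      mul_le_mul b8 b4 (abs_nonneg _) hdt0
    linarith
  have hcomb : dist (comb U z (t : ℝ)) (comb U z' (t' : ℝ)) ≤ dθ + L * dx + 2 * dt := by
    rw [dist_pi_le_iff (by nlinarith)]
    intro j
    rw [Real.dist_eq]
    exact hcoord j
  -- assemble
  have hv : ∀ (w : ↥(DSet U)) (s : unitInterval),
      WithLp.equiv 2 (↥(NerveSet U) × M) (defr U hO hcov (w, s)).val =
      (⟨comb U w (s : ℝ), comb_mem_nerve U hO hcov w s.2⟩, ptOf U w) := fun w s =>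
    Equiv.apply_symm_apply _ _
  have key := ((WithLp.prod_antilipschitzWith_ofLp 2 (↥(NerveSet U)) M :
    AntilipschitzWith _ (WithLp.equiv 2 (↥(NerveSet U) × M)))).le_mul_dist
    (defr U hO hcov (z, t)).val (defr U hO hcov (z', t')).val
  change dist _ _ ≤ _ * dist (WithLp.equiv 2 (↥(NerveSet U) × M) (defr U hO hcov (z, t)).val)
    (WithLp.equiv 2 (↥(NerveSet U) × M) (defr U hO hcov (z', t')).val) at key
  rw [hv z t, hv z' t'] at key
  rw [Subtype.dist_eq]
  refine key.trans ?_
  refine mul_le_mul_of_nonneg_left ?_ (NNReal.coe_nonneg _)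
  rw [Prod.dist_eq]
  refine max_le ?_ ?_
  · have : dist (⟨comb U z (t : ℝ), comb_mem_nerve U hO hcov z t.2⟩ : ↥(NerveSet U))
        ⟨comb U z' (t' : ℝ), comb_mem_nerve U hO hcov z' t'.2⟩ =
        dist (comb U z (t : ℝ)) (comb U z' (t' : ℝ)) := Subtype.dist_eq _ _
    rw [this]
    refine hcomb.trans ?_
    have h1 : L * dx ≤ L * D := mul_le_mul_of_nonneg_left hxz hL
    nlinarith
  · refine hxz.trans ?_
    nlinarith

end Aux

/-- For a compact metric space `M` with a finite good covering `𝒰`, and the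
projection `q : D(𝒰) → M`, `q(θ,x) = x`, there exists a Lipschitz map `τ : M → D(𝒰)` which
is a section of `q` and whose image is a Lipschitz strong deformation retract of `D(𝒰)`. -/
theorem exists_section_lipSDR {M : Type*} [MetricSpace M] [CompactSpace M]
    {N : ℕ} (U : Fin N → Set M) (hU : IsGoodCovering U) :
    ∃ (τ : M → ↥(DSet U)) (K : NNReal), LipschitzWith K τ ∧
      (∀ x, (WithLp.equiv 2 (↥(NerveSet U) × M) (τ x).val).2 = x) ∧
      IsLipSDR (Set.range τ) := by
  obtain ⟨hO, hcov, -, -, -⟩ := hU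
  obtain ⟨ε, hε, hS⟩ := exists_eps U hO hcov
  set c : ℝ≥0 := (2 : ℝ≥0) ^ (1 / (2:ℝ≥0∞)).toReal with hc
  refine ⟨tau U hO hcov, c * Real.toNNReal ((N + 1) / ε + 1), ?_, ?_, ?_⟩
  · apply LipschitzWith.of_dist_le_mul
    intro x y
    have hK : ((c * Real.toNNReal ((N + 1) / ε + 1) : ℝ≥0) : ℝ) =
        (c : ℝ) * ((N + 1) / ε + 1) := by
      rw [NNReal.coe_mul, Real.coe_toNNReal _ (by positivity)]
    rw [hK, mul_assoc]
    exact tau_dist_le U hO hcov hε hS x y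
  · exact fun x => ptOf_tau U hO hcov x
  · refine ⟨defr U hO hcov, c * Real.toNNReal ((N + 1) / ε + 3), ?_, ?_, ?_, ?_⟩
    · apply LipschitzWith.of_dist_le_mul
      intro p q
      have hK : ((c * Real.toNNReal ((N + 1) / ε + 3) : ℝ≥0) : ℝ) =
          (c : ℝ) * ((N + 1) / ε + 3) := by
        rw [NNReal.coe_mul, Real.coe_toNNReal _ (by positivity)]
      rw [hK, mul_assoc]
      exact defr_dist_le U hO hcov hε hS p q
    · exact fun z => defr_zero U hO hcov z
    · exact fun z => ⟨ptOf U z, (defr_one U hO hcov z).symm⟩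
    · rintro a ⟨x, rfl⟩ t
      exact defr_tau U hO hcov x t
end

section
/- Let M be a compact metric space with a finite good covering 𝒰 = {U_1,…,U_N}. Then M is Lipschitz homotopy equivalent to D(𝒰). -/
open Metric Set
open scoped ENNReal NNReal Classical

/-- Two maps between metric spaces are *Lipschitz homotopic*. -/
def LipHomotopic {X Y : Type*} [MetricSpace X] [MetricSpace Y] (f g : X → Y) : Prop :=
  ∃ (H : X × unitInterval → Y) (K : NNReal), LipschitzWith K H ∧
    (∀ x, H (x, 0) = f x) ∧ (∀ x, H (x, 1) = g x)

/-- Two metric spaces are *Lipschitz homotopy equivalent*. -/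
def LipHomotopyEquiv (X Y : Type*) [MetricSpace X] [MetricSpace Y] : Prop :=
  ∃ (f : X → Y) (g : Y → X) (Kf Kg : NNReal),
    LipschitzWith Kf f ∧ LipschitzWith Kg g ∧
      LipHomotopic (g ∘ f) id ∧ LipHomotopic (f ∘ g) id

section AuxLemmas


variable {M : Type*} [MetricSpace M] {N : ℕ}

noncomputable def cFun (U : Fin N → Set M) (j : Fin N) (x : M) : ℝ :=
  min (if (U j)ᶜ = ∅ then 1 else infDist x (U j)ᶜ) 1

lemma cFun_nonneg (U : Fin N → Set M) (j : Fin N) (x : M) : 0 ≤ cFun U j x := by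
  unfold cFun
  rcases eq_or_ne (U j)ᶜ ∅ with h | h
  · simp [h]
  · simp only [if_neg h]
    exact le_min infDist_nonneg zero_le_one

lemma cFun_le_one (U : Fin N → Set M) (j : Fin N) (x : M) : cFun U j x ≤ 1 :=
  min_le_right _ _

lemma cFun_lip (U : Fin N → Set M) (j : Fin N) : LipschitzWith 1 (cFun U j) := by
  unfold cFun
  rcases eq_or_ne (U j)ᶜ ∅ with h | h
  · simp only [if_pos h]
    exact (LipschitzWith.const (min 1 1)).weaken zero_le_one
  · simp only [if_neg h]
    exact (lipschitz_infDist_pt _).min_const 1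

lemma cFun_pos (U : Fin N → Set M) (j : Fin N) (x : M) (hj : IsOpen (U j))
    (hx : x ∈ U j) : 0 < cFun U j x := by
  unfold cFun
  rcases eq_or_ne (U j)ᶜ ∅ with h | h
  · simp [h]
  · simp only [if_neg h]
    refine lt_min ?_ zero_lt_one
    exact ((hj.isClosed_compl).notMem_iff_infDist_pos
      (nonempty_iff_ne_empty.mpr h)).mp (by simpa using hx)

lemma cFun_ne_zero (U : Fin N → Set M) (j : Fin N) (x : M)
    (h : cFun U j x ≠ 0) : x ∈ U j := by
  unfold cFun at h
  rcases eq_or_ne (U j)ᶜ ∅ with he | he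
  · have : U j = univ := compl_empty_iff.mp he
    simp [this]
  · simp only [if_neg he] at h
    by_contra hx
    have hx' : x ∈ (U j)ᶜ := hx
    have : infDist x (U j)ᶜ = 0 := infDist_zero_of_mem hx'
    simp [this] at h

noncomputable def sFun (U : Fin N → Set M) (x : M) : ℝ := ∑ j, cFun U j x

lemma cFun_le_sFun (U : Fin N → Set M) (j : Fin N) (x : M) :
    cFun U j x ≤ sFun U x :=
  Finset.single_le_sum (fun i _ => cFun_nonneg U i x) (Finset.mem_univ j)

lemma sFun_dist (U : Fin N → Set M) (x y : M) :
    dist (sFun U x) (sFun U y) ≤ N * dist x y := by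
  rw [sFun, sFun, Real.dist_eq, ← Finset.sum_sub_distrib]
  calc |∑ j, (cFun U j x - cFun U j y)| ≤ ∑ j, |cFun U j x - cFun U j y| :=
        Finset.abs_sum_le_sum_abs _ _
    _ ≤ ∑ _j : Fin N, dist x y := by
        refine Finset.sum_le_sum fun j _ => ?_
        rw [← Real.dist_eq]
        simpa using (cFun_lip U j).dist_le_mul x y
    _ = N * dist x y := by simp [Finset.sum_const, Finset.card_univ, nsmul_eq_mul]

lemma sFun_lip (U : Fin N → Set M) : LipschitzWith (N : NNReal) (sFun U) :=
  LipschitzWith.of_dist_le_mul (by simpa using sFun_dist U)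

lemma withLp_dist_le {A B : Type*} [MetricSpace A] [MetricSpace B] (a b : A × B) :
    dist ((WithLp.equiv 2 (A × B)).symm a) ((WithLp.equiv 2 (A × B)).symm b) ≤
      2 * max (dist a.1 b.1) (dist a.2 b.2) := by
  have h := (WithLp.prod_antilipschitzWith_ofLp 2 A B).le_mul_dist
    ((WithLp.equiv 2 (A × B)).symm a) ((WithLp.equiv 2 (A × B)).symm b)
  simp only [WithLp.equiv_symm_apply, WithLp.ofLp_toLp] at h
  refine h.trans ?_
  rw [Prod.dist_eq]
  have hK : ((((2 : NNReal) ^ (1 / (2:ℝ≥0∞)).toReal) : NNReal) : ℝ) ≤ 2 := by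
    rw [NNReal.coe_rpow]
    calc (2:ℝ) ^ (1 / (2:ℝ≥0∞)).toReal ≤ 2 ^ (1:ℝ) := by
          apply Real.rpow_le_rpow_of_exponent_le one_le_two
          simp [ENNReal.toReal_div]
          norm_num
      _ = 2 := by norm_num
  exact mul_le_mul_of_nonneg_right hK (le_trans dist_nonneg (le_max_left _ _))

lemma withLp_fst_dist (A B : Type*) [MetricSpace A] [MetricSpace B]
    (z w : WithLp 2 (A × B)) :
    dist (WithLp.equiv 2 (A × B) z).1 (WithLp.equiv 2 (A × B) w).1 ≤ dist z w := by
  have h := (WithLp.prod_lipschitzWith_ofLp 2 A B).dist_le_mul z w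
  simp only [NNReal.coe_one, one_mul] at h
  have h2 : dist (WithLp.equiv 2 (A × B) z).1 (WithLp.equiv 2 (A × B) w).1 ≤
      dist (WithLp.equiv 2 (A × B) z) (WithLp.equiv 2 (A × B) w) := by
    rw [Prod.dist_eq]; exact le_max_left _ _
  exact h2.trans h

lemma withLp_snd_dist (A B : Type*) [MetricSpace A] [MetricSpace B]
    (z w : WithLp 2 (A × B)) :
    dist (WithLp.equiv 2 (A × B) z).2 (WithLp.equiv 2 (A × B) w).2 ≤ dist z w := by
  have h := (WithLp.prod_lipschitzWith_ofLp 2 A B).dist_le_mul z w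
  simp only [NNReal.coe_one, one_mul] at h
  have h2 : dist (WithLp.equiv 2 (A × B) z).2 (WithLp.equiv 2 (A × B) w).2 ≤
      dist (WithLp.equiv 2 (A × B) z) (WithLp.equiv 2 (A × B) w) := by
    rw [Prod.dist_eq]; exact le_max_right _ _
  exact h2.trans h


lemma phi_dist (U : Fin N → Set M) {ε : ℝ} (hεpos : 0 < ε)
    (hεle : ∀ x, ε ≤ sFun U x) (j : Fin N) (x y : M) :
    dist (cFun U j x / sFun U x) (cFun U j y / sFun U y) ≤ ((1 + N) / ε) * dist x y := by
  have hSx := lt_of_lt_of_le hεpos (hεle x)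
  have hSy := lt_of_lt_of_le hεpos (hεle y)
  rw [Real.dist_eq]
  have heq : cFun U j x / sFun U x - cFun U j y / sFun U y =
      ((cFun U j x - cFun U j y) * sFun U y + cFun U j y * (sFun U y - sFun U x)) /
        (sFun U x * sFun U y) := by
    field_simp
    ring
  rw [heq, abs_div, abs_of_pos (mul_pos hSx hSy)]
  have hc : |cFun U j x - cFun U j y| ≤ dist x y := by
    rw [← Real.dist_eq]; simpa using (cFun_lip U j).dist_le_mul x y
  have hs : |sFun U y - sFun U x| ≤ N * dist x y := by
    rw [← Real.dist_eq]
    simpa [dist_comm] using sFun_dist U y x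
  have hd0 : (0:ℝ) ≤ dist x y := dist_nonneg
  have hnum : |(cFun U j x - cFun U j y) * sFun U y + cFun U j y * (sFun U y - sFun U x)| ≤
      sFun U y * ((1 + N) * dist x y) := by
    calc |(cFun U j x - cFun U j y) * sFun U y + cFun U j y * (sFun U y - sFun U x)|
        ≤ |(cFun U j x - cFun U j y) * sFun U y| + |cFun U j y * (sFun U y - sFun U x)| :=
          abs_add_le _ _
      _ = |cFun U j x - cFun U j y| * |sFun U y| + |cFun U j y| * |sFun U y - sFun U x| := by
          rw [abs_mul, abs_mul]
      _ ≤ sFun U y * ((1 + N) * dist x y) := by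
          rw [abs_of_pos hSy, abs_of_nonneg (cFun_nonneg U j y)]
          nlinarith [cFun_le_sFun U j y, cFun_nonneg U j y, hSy.le,
            abs_nonneg (sFun U y - sFun U x)]
  calc |(cFun U j x - cFun U j y) * sFun U y + cFun U j y * (sFun U y - sFun U x)| /
        (sFun U x * sFun U y)
      ≤ (sFun U y * ((1 + N) * dist x y)) / (ε * sFun U y) :=
        div_le_div₀ (mul_nonneg hSy.le (by positivity)) hnum (mul_pos hεpos hSy)
          (mul_le_mul_of_nonneg_right (hεle x) hSy.le)
    _ = (1 + N) / ε * dist x y := by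
        rw [mul_comm ε (sFun U y), mul_div_mul_left _ _ hSy.ne']
        ring


end AuxLemmas

/-- A compact metric space `M` with a finite good covering `𝒰` is
Lipschitz homotopy equivalent to `D(𝒰)`. -/
theorem lipHomotopyEquiv_DSet {M : Type*} [MetricSpace M] [CompactSpace M]
    {N : ℕ} (U : Fin N → Set M) (hU : IsGoodCovering U) :
    LipHomotopyEquiv M (DSet U) := by
  classical
  obtain ⟨hopen, hcov, -, -, -⟩ := hU
  rcases isEmpty_or_nonempty M with hM | hM
  · refine ⟨fun x => isEmptyElim x, fun z => (WithLp.equiv 2 _ z.1).2, 1, 1, ?_, ?_, ?_, ?_⟩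
    · intro x; exact isEmptyElim x
    · intro z _; exact isEmptyElim ((WithLp.equiv 2 _ z.1).2)
    · exact ⟨fun p => p.1, 1, LipschitzWith.prod_fst, fun x => isEmptyElim x, fun _ => rfl⟩
    · exact ⟨fun p => p.1, 1, LipschitzWith.prod_fst,
        fun z => isEmptyElim ((WithLp.equiv 2 _ z.1).2), fun _ => rfl⟩
  · have hSpos : ∀ x : M, 0 < sFun U x := by
      intro x
      have hx : x ∈ ⋃ j, U j := by rw [hcov]; exact mem_univ x
      obtain ⟨j, hj⟩ := mem_iUnion.mp hx
      exact Finset.sum_pos' (fun i _ => cFun_nonneg U i x)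
        ⟨j, Finset.mem_univ j, cFun_pos U j x (hopen j) hj⟩
    obtain ⟨x₀, -, hmin⟩ := isCompact_univ.exists_isMinOn univ_nonempty
      ((sFun_lip U).continuous.continuousOn)
    have hεpos : 0 < sFun U x₀ := hSpos x₀
    have hεle : ∀ x, sFun U x₀ ≤ sFun U x := fun x => isMinOn_iff.mp hmin x (mem_univ x)
    set ε : ℝ := sFun U x₀ with hεdef
    set C : ℝ := (1 + N) / ε with hCdef
    have hC0 : 0 ≤ C := by positivity
    set φ : Fin N → M → ℝ := fun j x => cFun U j x / sFun U x with hφdef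
    have hφ_nonneg : ∀ j x, 0 ≤ φ j x := fun j x =>
      div_nonneg (cFun_nonneg U j x) (hSpos x).le
    have hφ_le_one : ∀ j x, φ j x ≤ 1 := fun j x =>
      (div_le_one (hSpos x)).mpr (cFun_le_sFun U j x)
    have hφ_sum : ∀ x, ∑ j, φ j x = 1 := by
      intro x
      simp only [hφdef]
      rw [← Finset.sum_div]
      exact div_self (hSpos x).ne'
    have hφ_ne : ∀ j x, φ j x ≠ 0 → x ∈ U j := by
      intro j x h
      refine cFun_ne_zero U j x fun hc => h ?_
      simp [hφdef, hc]
    have hφ_dist : ∀ j x y, dist (φ j x) (φ j y) ≤ C * dist x y :=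
      fun j x y => phi_dist U hεpos hεle j x y
    have hnerve : ∀ x : M, (fun j => φ j x) ∈ NerveSet U := by
      intro x
      refine ⟨fun j => ⟨hφ_nonneg j x, hφ_le_one j x⟩, hφ_sum x, ⟨x, ?_⟩⟩
      rw [mem_iInter₂]
      intro j hj
      exact hφ_ne j x hj
    set E := WithLp.equiv 2 (↥(NerveSet U) × M) with hEdef
    set θmap : M → ↥(NerveSet U) := fun x => ⟨fun j => φ j x, hnerve x⟩ with hθdef
    have hθ_dist : ∀ x y, dist (θmap x) (θmap y) ≤ C * dist x y := by
      intro x y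
      rw [Subtype.dist_eq]
      exact (dist_pi_le_iff (mul_nonneg hC0 dist_nonneg)).mpr fun j => hφ_dist j x y
    have hfmem : ∀ x : M, E.symm (θmap x, x) ∈ DSet U := by
      intro x
      simp only [DSet, mem_setOf_eq, hEdef, Equiv.apply_symm_apply]
      rw [mem_iInter₂]
      intro j hj
      exact hφ_ne j x hj
    set f : M → ↥(DSet U) := fun x => ⟨E.symm (θmap x, x), hfmem x⟩ with hfdef
    set g : ↥(DSet U) → M := fun z => (E z.1).2 with hgdef
    have hgf : ∀ x, g (f x) = x := by
      intro x
      simp only [hfdef, hgdef, Equiv.apply_symm_apply]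
    have hflip : ∀ x y : M, dist (f x) (f y) ≤ (2 * (C + 1)) * dist x y := by
      intro x y
      rw [Subtype.dist_eq]
      refine (withLp_dist_le (θmap x, x) (θmap y, y)).trans ?_
      have hmax : max (dist (θmap x) (θmap y)) (dist x y) ≤ (C + 1) * dist x y := by
        have := hθ_dist x y
        have hd0 : (0:ℝ) ≤ dist x y := dist_nonneg
        refine max_le (by nlinarith) (by nlinarith)
      nlinarith [hmax, dist_nonneg (x := x) (y := y)]
    have hglip : ∀ z w : ↥(DSet U), dist (g z) (g w) ≤ 1 * dist z w := by
      intro z w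
      rw [one_mul, hgdef]
      exact (withLp_snd_dist _ _ z.1 w.1).trans (le_of_eq (Subtype.dist_eq z w).symm)
    -- the homotopy on DSet
    have hzU : ∀ (z : ↥(DSet U)) (j : Fin N), ((E z.1).1 : Fin N → ℝ) j ≠ 0 → (E z.1).2 ∈ U j := by
      intro z j hj
      exact mem_iInter₂.mp z.2 j hj
    set η : ↥(DSet U) × unitInterval → Fin N → ℝ := fun p j =>
      (1 - (p.2 : ℝ)) * φ j ((E p.1.1).2) + (p.2 : ℝ) * ((E p.1.1).1 : Fin N → ℝ) j with hηdef
    have hηU : ∀ p (j : Fin N), η p j ≠ 0 → (E p.1.1).2 ∈ U j := by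
      intro p j hj
      have hne : φ j ((E p.1.1).2) ≠ 0 ∨ ((E p.1.1).1 : Fin N → ℝ) j ≠ 0 := by
        by_contra h
        push_neg at h
        exact hj (by simp [hηdef, h.1, h.2])
      rcases hne with h | h
      · exact hφ_ne j _ h
      · exact hzU p.1 j h
    have hηmem : ∀ p, η p ∈ NerveSet U := by
      intro p
      obtain ⟨hIcc, hsum, -⟩ := (E p.1.1).1.2
      have ht0 : (0:ℝ) ≤ (p.2 : ℝ) := p.2.2.1
      have ht1 : (p.2 : ℝ) ≤ 1 := p.2.2.2
      refine ⟨fun j => ?_, ?_, ⟨(E p.1.1).2, ?_⟩⟩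
      · have h1 := hφ_nonneg j ((E p.1.1).2)
        have h2 := hφ_le_one j ((E p.1.1).2)
        have h3 := (hIcc j).1
        have h4 := (hIcc j).2
        constructor
        · simp only [hηdef]; nlinarith
        · simp only [hηdef]; nlinarith
      · simp only [hηdef]
        rw [Finset.sum_add_distrib, ← Finset.mul_sum, ← Finset.mul_sum, hφ_sum, hsum]
        ring
      · rw [mem_iInter₂]
        intro j hj
        exact hηU p j hj
    have hdmem : ∀ p, E.symm (⟨η p, hηmem p⟩, (E p.1.1).2) ∈ DSet U := by
      intro p
      simp only [DSet, mem_setOf_eq, hEdef, Equiv.apply_symm_apply]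
      rw [mem_iInter₂]
      intro j hj
      exact hηU p j hj
    set Hd : ↥(DSet U) × unitInterval → ↥(DSet U) := fun p =>
      ⟨E.symm (⟨η p, hηmem p⟩, (E p.1.1).2), hdmem p⟩ with hHddef
    have hHd0 : ∀ z, Hd (z, 0) = f (g z) := by
      intro z
      apply Subtype.ext
      simp only [hHddef, hfdef, hgdef]
      congr 1
      refine Prod.ext ?_ rfl
      apply Subtype.ext
      funext j
      simp [hηdef, hθdef]
    have hHd1 : ∀ z, Hd (z, 1) = z := by
      intro z
      apply Subtype.ext
      simp only [hHddef]
      have h1 : (⟨η (z, 1), hηmem (z, 1)⟩ : ↥(NerveSet U)) = (E z.1).1 := by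
        apply Subtype.ext
        funext j
        simp [hηdef]
      rw [h1, Prod.mk.eta, Equiv.symm_apply_apply]
    have hHdlip : ∀ p q, dist (Hd p) (Hd q) ≤ (2 * (C + 3)) * dist p q := by
      intro p q
      have hd0 : (0:ℝ) ≤ dist p q := dist_nonneg
      have hz_le : dist p.1.1 q.1.1 ≤ dist p q := by
        have h1 : dist p.1 q.1 ≤ dist p q := by rw [Prod.dist_eq]; exact le_max_left _ _
        rwa [Subtype.dist_eq] at h1
      have ht_le : |(p.2 : ℝ) - (q.2 : ℝ)| ≤ dist p q := by
        have h1 : dist p.2 q.2 ≤ dist p q := by rw [Prod.dist_eq]; exact le_max_right _ _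
        rwa [Subtype.dist_eq, Real.dist_eq] at h1
      have hx_le : dist (E p.1.1).2 (E q.1.1).2 ≤ dist p q :=
        (withLp_snd_dist _ _ p.1.1 q.1.1).trans hz_le
      have hθ_le : ∀ j : Fin N,
          |((E p.1.1).1 : Fin N → ℝ) j - ((E q.1.1).1 : Fin N → ℝ) j| ≤ dist p q := by
        intro j
        have h2 : dist (((E p.1.1).1 : Fin N → ℝ) j) (((E q.1.1).1 : Fin N → ℝ) j) ≤
            dist ((E p.1.1).1 : Fin N → ℝ) ((E q.1.1).1 : Fin N → ℝ) := dist_le_pi_dist _ _ j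
        rw [Real.dist_eq] at h2
        refine h2.trans ?_
        have h3 : dist ((E p.1.1).1 : Fin N → ℝ) ((E q.1.1).1 : Fin N → ℝ) =
            dist (E p.1.1).1 (E q.1.1).1 := (Subtype.dist_eq _ _).symm
        rw [h3]
        exact (withLp_fst_dist _ _ p.1.1 q.1.1).trans hz_le
      have hcomp : ∀ j : Fin N, |η p j - η q j| ≤ (C + 3) * dist p q := by
        intro j
        obtain ⟨hIccp, -, -⟩ := (E p.1.1).1.2
        obtain ⟨hIccq, -, -⟩ := (E q.1.1).1.2
        set t : ℝ := (p.2 : ℝ)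
        set s : ℝ := (q.2 : ℝ)
        set a : ℝ := φ j ((E p.1.1).2)
        set a' : ℝ := φ j ((E q.1.1).2)
        set b : ℝ := ((E p.1.1).1 : Fin N → ℝ) j
        set b' : ℝ := ((E q.1.1).1 : Fin N → ℝ) j
        have hkey : η p j - η q j = (1 - t) * (a - a') + t * (b - b') + ((s - t) * a' + (t - s) * b') := by
          simp only [hηdef]; ring
        have ht0 : (0:ℝ) ≤ t := p.2.2.1
        have ht1 : t ≤ 1 := p.2.2.2
        have haa : |a - a'| ≤ C * dist p q := by
          have := hφ_dist j ((E p.1.1).2) ((E q.1.1).2)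
          rw [Real.dist_eq] at this
          exact this.trans (mul_le_mul_of_nonneg_left hx_le hC0)
        have hbb : |b - b'| ≤ dist p q := hθ_le j
        have ha'0 : 0 ≤ a' := hφ_nonneg j _
        have ha'1 : a' ≤ 1 := hφ_le_one j _
        have hb'0 : 0 ≤ b' := (hIccq j).1
        have hb'1 : b' ≤ 1 := (hIccq j).2
        calc |η p j - η q j| = |(1 - t) * (a - a') + t * (b - b') + ((s - t) * a' + (t - s) * b')| := by rw [hkey]
          _ ≤ |(1 - t) * (a - a')| + |t * (b - b')| + (|(s - t) * a'| + |(t - s) * b'|) := by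
              refine (abs_add_le _ _).trans ?_
              gcongr
              · exact abs_add_le _ _
              · exact abs_add_le _ _
          _ = |1 - t| * |a - a'| + |t| * |b - b'| + (|s - t| * |a'| + |t - s| * |b'|) := by
              rw [abs_mul, abs_mul, abs_mul, abs_mul]
          _ ≤ 1 * (C * dist p q) + 1 * dist p q + (dist p q * 1 + dist p q * 1) := by
              have e1 : |1 - t| ≤ 1 := by rw [abs_of_nonneg (by linarith)]; linarith
              have e2 : |t| ≤ 1 := by rw [abs_of_nonneg ht0]; exact ht1
              have e3 : |s - t| ≤ dist p q := by rw [abs_sub_comm]; exact ht_le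
              have e4 : |t - s| ≤ dist p q := ht_le
              have e5 : |a'| ≤ 1 := abs_le.mpr ⟨by linarith, ha'1⟩
              have e6 : |b'| ≤ 1 := abs_le.mpr ⟨by linarith, hb'1⟩
              gcongr <;> first | exact abs_nonneg _ | assumption | positivity
          _ ≤ (C + 3) * dist p q := by nlinarith
      rw [Subtype.dist_eq]
      simp only [hHddef]
      refine (withLp_dist_le _ _).trans ?_
      have h1 : dist (⟨η p, hηmem p⟩ : ↥(NerveSet U)) ⟨η q, hηmem q⟩ ≤ (C + 3) * dist p q := by
        rw [Subtype.dist_eq]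
        refine (dist_pi_le_iff (by positivity)).mpr fun j => ?_
        rw [Real.dist_eq]
        exact hcomp j
      have h2 : dist (E p.1.1).2 (E q.1.1).2 ≤ (C + 3) * dist p q := by
        refine hx_le.trans ?_
        nlinarith
      have hmax := max_le h1 h2
      nlinarith [hmax]
    refine ⟨f, g, (2 * (C + 1)).toNNReal, 1, ?_, ?_, ?_, ?_⟩
    · refine LipschitzWith.of_dist_le_mul fun x y => ?_
      rw [Real.coe_toNNReal _ (by positivity)]
      exact hflip x y
    · refine LipschitzWith.of_dist_le_mul fun z w => by simpa using hglip z w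
    · exact ⟨fun p => p.1, 1, LipschitzWith.prod_fst, fun x => (hgf x).symm, fun _ => rfl⟩
    · refine ⟨Hd, (2 * (C + 3)).toNNReal, ?_, ?_, ?_⟩
      · refine LipschitzWith.of_dist_le_mul fun p q => ?_
        rw [Real.coe_toNNReal _ (by positivity)]
        exact hHdlip p q
      · intro z; exact hHd0 z
      · intro z; exact hHd1 z
end
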